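/- Let f : Q → ℝ be continuous and bounded below on a nonempty relatively closed subset A ⊂ Q with f = +∞ off A, and define I_P(ρ) = ∫_X φ(ρ) dμ + f(b_ρ) on P(X) and I_Q(b) = ψ_s(b) + f(b) on Q, where b_ρ = ∫_X a ρ dμ. Then inf_{ρ ∈ P(X)} I_P(ρ) = inf_{b ∈ Q} I_Q(b), both infima are attained, and b* minimizes I_Q globally if and only if ρ_{b*} minimizes I_P globally; moreover every global minimizer of I_P equals ρ_{b*} for some global minimizer b* of I_Q. -/

import Mathlib

open MeasureTheory Filter

def probDens {X : Type*} [MeasurableSpace X] (μ : Measure X) : Set (X → ℝ) :=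
  {ρ | Integrable ρ μ ∧ 0 ≤ᵐ[μ] ρ ∧ ∫ t, ρ t ∂μ = 1}

/-- The vector of moments of `a` under the density `ρ`. -/
noncomputable def mom {X : Type*} [MeasurableSpace X] (μ : Measure X) {k : ℕ}
    (a : X → EuclideanSpace ℝ (Fin k)) (ρ : X → ℝ) : EuclideanSpace ℝ (Fin k) :=
  (EuclideanSpace.equiv (Fin k) ℝ).symm fun i => ∫ t, a t i * ρ t ∂μ

/-- The set `Q` of admissible moments. -/
def momentSet {X : Type*} [MeasurableSpace X] (μ : Measure X) {k : ℕ}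
    (a : X → EuclideanSpace ℝ (Fin k)) : Set (EuclideanSpace ℝ (Fin k)) :=
  mom μ a '' probDens μ

lemma coord_abs_le_norm' {k : ℕ} (x : EuclideanSpace ℝ (Fin k)) (i : Fin k) : |x i| ≤ ‖x‖ := by
  rw [EuclideanSpace.norm_eq, ← Real.sqrt_sq_eq_abs]
  apply Real.sqrt_le_sqrt
  have : x i ^ 2 = ‖x i‖ ^ 2 := by rw [Real.norm_eq_abs, sq_abs]
  rw [this]
  exact Finset.single_le_sum (f := fun j => ‖x j‖ ^ 2) (fun j _ => sq_nonneg _) (Finset.mem_univ i)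

lemma euclidean_norm_le_of_coords {k : ℕ} {C : ℝ} (hC : 0 ≤ C) (x : EuclideanSpace ℝ (Fin k))
    (h : ∀ i, |x i| ≤ C) : ‖x‖ ≤ C * Real.sqrt k := by
  rw [EuclideanSpace.norm_eq]
  have hs : ∑ i : Fin k, ‖x i‖ ^ 2 ≤ ∑ _i : Fin k, C ^ 2 := by
    refine Finset.sum_le_sum fun i _ => ?_
    rw [Real.norm_eq_abs]
    exact pow_le_pow_left₀ (abs_nonneg _) (h i) 2
  calc Real.sqrt (∑ i : Fin k, ‖x i‖ ^ 2) ≤ Real.sqrt (∑ _i : Fin k, C ^ 2) :=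
        Real.sqrt_le_sqrt hs
    _ = C * Real.sqrt k := by
        rw [Finset.sum_const, Finset.card_univ, Fintype.card_fin, nsmul_eq_mul,
          Real.sqrt_mul (Nat.cast_nonneg k), Real.sqrt_sq hC, mul_comm]

/-- The moment set is bounded when `a` is essentially bounded. -/
lemma momentSet_bounded {X : Type*} [MeasurableSpace X] (μ : Measure X) {k : ℕ}
    (a : X → EuclideanSpace ℝ (Fin k)) (ha : MemLp a ⊤ μ) :
    ∃ R : ℝ, ∀ b ∈ momentSet μ a, ‖b‖ ≤ R := by
  obtain ⟨C, hC0, hC⟩ : ∃ C : ℝ, 0 ≤ C ∧ ∀ᵐ t ∂μ, ‖a t‖ ≤ C := by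
    refine ⟨(eLpNormEssSup a μ).toReal, ENNReal.toReal_nonneg, ?_⟩
    have hlt : eLpNormEssSup a μ < ⊤ := by
      have := ha.2; rwa [eLpNorm_exponent_top] at this
    filter_upwards [ae_le_eLpNormEssSup (f := a) (μ := μ)] with t ht
    simpa using ENNReal.toReal_mono hlt.ne ht
  refine ⟨C * Real.sqrt k, ?_⟩
  rintro b ⟨ρ, ⟨hint, hpos, hone⟩, rfl⟩
  refine euclidean_norm_le_of_coords hC0 _ fun i => ?_
  have key : ‖∫ t, a t i * ρ t ∂μ‖ ≤ ∫ t, C * ρ t ∂μ := by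
    refine norm_integral_le_of_norm_le (hint.const_mul C) ?_
    filter_upwards [hC, hpos] with t h1 h2
    rw [norm_mul, Real.norm_eq_abs, Real.norm_eq_abs, abs_of_nonneg h2]
    exact mul_le_mul_of_nonneg_right ((coord_abs_le_norm' (a t) i).trans h1) h2
  have : mom μ a ρ i = ∫ t, a t i * ρ t ∂μ := rfl
  rw [this, ← Real.norm_eq_abs]
  calc ‖∫ t, a t i * ρ t ∂μ‖ ≤ ∫ t, C * ρ t ∂μ := key
    _ = C := by rw [integral_const_mul, hone, mul_one]

/-- Equivalence of global minimisation of the microscopic free energy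
`I_P(ρ) = ∫ φ(ρ) dμ + f(b_ρ)` and the macroscopic free energy
`I_Q(b) = ψ_s(b) + f(b)`: the infima coincide and are attained, `b*` minimises `I_Q`
iff `ρ_{b*}` minimises `I_P`, and every global minimiser of `I_P` is of the form
`ρ_{b*}` for a global minimiser `b*` of `I_Q`. -/
theorem global_minimisers_equiv {X : Type*} [MeasurableSpace X]
    (μ : Measure X) [IsFiniteMeasure μ] {k : ℕ}
    (a : X → EuclideanSpace ℝ (Fin k)) (ha : MemLp a ⊤ μ)
    (φ : ℝ → ℝ)
    (hconv : StrictConvexOn ℝ (Set.Ioi 0) φ) (hconv0 : ConvexOn ℝ (Set.Ici 0) φ)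
    -- the singular potential, its optimal densities, and their properties
    (ψ : EuclideanSpace ℝ (Fin k) → ℝ) (ρmin : EuclideanSpace ℝ (Fin k) → X → ℝ)
    (hρP : ∀ b ∈ momentSet μ a, ρmin b ∈ probDens μ)
    (hρgen : ∀ b ∈ momentSet μ a, mom μ a (ρmin b) = b)
    (hρint : ∀ b ∈ momentSet μ a, Integrable (fun t => φ (ρmin b t)) μ)
    (hψ : ∀ b ∈ momentSet μ a, ψ b = ∫ t, φ (ρmin b t) ∂μ)
    (hmin : ∀ b ∈ momentSet μ a, ∀ ρ ∈ probDens μ, mom μ a ρ = b →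
      Integrable (fun t => φ (ρ t)) μ → ψ b ≤ ∫ t, φ (ρ t) ∂μ)
    (huniq : ∀ b ∈ momentSet μ a, ∀ ρ ∈ probDens μ, mom μ a ρ = b →
      Integrable (fun t => φ (ρ t)) μ → ψ b = ∫ t, φ (ρ t) ∂μ → ρ =ᵐ[μ] ρmin b)
    (hψcont : ContinuousOn ψ (momentSet μ a))
    (hblow : ∀ M : ℝ, ∃ ε : ℝ, 0 < ε ∧ ∀ b ∈ momentSet μ a,
      Metric.infDist b (frontier (momentSet μ a)) ≤ ε → M ≤ ψ b)
    -- the constraint set A and the function f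
    (A : Set (EuclideanSpace ℝ (Fin k))) (hAne : A.Nonempty)
    (hAQ : A ⊆ momentSet μ a) (hAcl : closure A ∩ momentSet μ a ⊆ A)
    (f : EuclideanSpace ℝ (Fin k) → ℝ) (hf : ContinuousOn f A)
    (hfbd : ∃ Cf : ℝ, ∀ b ∈ A, Cf ≤ f b) :
    let SP : Set (X → ℝ) := {ρ | ρ ∈ probDens μ ∧
      Integrable (fun t => φ (ρ t)) μ ∧ mom μ a ρ ∈ A}
    let IP : (X → ℝ) → ℝ := fun ρ => (∫ t, φ (ρ t) ∂μ) + f (mom μ a ρ)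
    let IQ : EuclideanSpace ℝ (Fin k) → ℝ := fun b => ψ b + f b
    (∃ b ∈ A, ∀ b' ∈ A, IQ b ≤ IQ b') ∧
    (∃ ρ ∈ SP, ∀ σ ∈ SP, IP ρ ≤ IP σ) ∧
    sInf (IQ '' A) = sInf (IP '' SP) ∧
    (∀ b ∈ A, ((∀ b' ∈ A, IQ b ≤ IQ b') ↔
      (ρmin b ∈ SP ∧ ∀ σ ∈ SP, IP (ρmin b) ≤ IP σ))) ∧
    (∀ ρ ∈ SP, (∀ σ ∈ SP, IP ρ ≤ IP σ) →
      ∃ b ∈ A, (∀ b' ∈ A, IQ b ≤ IQ b') ∧ ρ =ᵐ[μ] ρmin b) := by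
  intro SP IP IQ
  obtain ⟨Cf, hCf⟩ := hfbd
  obtain ⟨b0, hb0A⟩ := hAne
  -- Fact 1: for b ∈ A, ρmin b ∈ SP and IP (ρmin b) = IQ b
  have fact1 : ∀ b ∈ A, ρmin b ∈ SP ∧ IP (ρmin b) = IQ b := by
    intro b hbA
    have hbQ := hAQ hbA
    have h1 := hρP b hbQ
    have h2 := hρgen b hbQ
    have h3 := hρint b hbQ
    refine ⟨⟨h1, h3, by rw [h2]; exact hbA⟩, ?_⟩
    show (∫ t, φ (ρmin b t) ∂μ) + f (mom μ a (ρmin b)) = ψ b + f b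
    rw [h2, hψ b hbQ]
  -- Fact 2: for ρ ∈ SP, mom ρ ∈ A and IQ (mom ρ) ≤ IP ρ
  have fact2 : ∀ ρ ∈ SP, mom μ a ρ ∈ A ∧ IQ (mom μ a ρ) ≤ IP ρ := by
    rintro ρ ⟨hρ, hρi, hρA⟩
    refine ⟨hρA, ?_⟩
    have hQ := hAQ hρA
    have := hmin _ hQ ρ hρ rfl hρi
    show ψ (mom μ a ρ) + f (mom μ a ρ) ≤ (∫ t, φ (ρ t) ∂μ) + f (mom μ a ρ)
    linarith
  -- existence of a minimiser of IQ on A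
  have hex : ∃ b ∈ A, ∀ b' ∈ A, IQ b ≤ IQ b' := by
    obtain ⟨R, hR⟩ := momentSet_bounded μ a ha
    set M0 : ℝ := IQ b0 - Cf + 1 with hM0
    obtain ⟨ε, hε, hblow'⟩ := hblow M0
    set K : Set (EuclideanSpace ℝ (Fin k)) :=
      closure A ∩ {b | ε ≤ Metric.infDist b (frontier (momentSet μ a))} with hK
    have hKA : K ⊆ A := by
      rintro b ⟨hb1, hb2⟩
      apply hAcl
      refine ⟨hb1, ?_⟩
      have hbQc : b ∈ closure (momentSet μ a) := closure_mono hAQ hb1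
      have hnf : b ∉ frontier (momentSet μ a) := by
        intro hbf
        have h0 := Metric.infDist_zero_of_mem hbf
        have hb2' : ε ≤ Metric.infDist b (frontier (momentSet μ a)) := hb2
        rw [h0] at hb2'
        linarith
      have : b ∈ interior (momentSet μ a) := by
        by_contra hni
        exact hnf ⟨hbQc, hni⟩
      exact interior_subset this
    have hmem : ∀ b ∈ A, IQ b ≤ IQ b0 → b ∈ K := by
      intro b hbA hle
      refine ⟨subset_closure hbA, ?_⟩
      by_contra h
      simp only [Set.mem_setOf_eq, not_le] at h
      have hψb := hblow' b (hAQ hbA) h.le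
      have hfb := hCf b hbA
      have : IQ b = ψ b + f b := rfl
      rw [this] at hle
      rw [hM0] at hψb
      linarith
    have hKne : K.Nonempty := ⟨b0, hmem b0 hb0A le_rfl⟩
    have hKcl : IsClosed K :=
      isClosed_closure.inter (isClosed_le continuous_const (Metric.continuous_infDist_pt _))
    have hKbdd : Bornology.IsBounded K := by
      have hsub : K ⊆ Metric.closedBall 0 R := by
        intro b hb
        have : b ∈ closure (momentSet μ a) := closure_mono hAQ hb.1
        have hcl : closure (momentSet μ a) ⊆ Metric.closedBall 0 R := by
          apply closure_minimal _ Metric.isClosed_closedBall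
          intro x hx
          simpa [Metric.mem_closedBall, dist_zero_right] using hR x hx
        exact hcl this
      exact Metric.isBounded_closedBall.subset hsub
    have hKcpt : IsCompact K := Metric.isCompact_of_isClosed_isBounded hKcl hKbdd
    have hcont : ContinuousOn IQ K :=
      ((hψcont.mono (hKA.trans hAQ)).add (hf.mono hKA))
    obtain ⟨bs, hbsK, hbsmin⟩ := hKcpt.exists_isMinOn hKne hcont
    refine ⟨bs, hKA hbsK, fun b' hb' => ?_⟩
    by_cases h : IQ b' ≤ IQ b0
    · exact hbsmin (hmem b' hb' h)
    · exact (hbsmin (hmem b0 hb0A le_rfl)).trans (not_le.mp h).le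
  obtain ⟨bs, hbsA, hbsmin⟩ := hex
  obtain ⟨hρsSP, hρsEq⟩ := fact1 bs hbsA
  -- ρmin bs minimises IP
  have hIPmin : ∀ σ ∈ SP, IP (ρmin bs) ≤ IP σ := by
    intro σ hσ
    obtain ⟨hσA, hσle⟩ := fact2 σ hσ
    calc IP (ρmin bs) = IQ bs := hρsEq
      _ ≤ IQ (mom μ a σ) := hbsmin _ hσA
      _ ≤ IP σ := hσle
  refine ⟨⟨bs, hbsA, hbsmin⟩, ⟨ρmin bs, hρsSP, hIPmin⟩, ?_, ?_, ?_⟩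
  · -- sInf equality
    have h1 : sInf (IQ '' A) = IQ bs := by
      apply le_antisymm
      · exact csInf_le ⟨IQ bs, by rintro _ ⟨b', hb', rfl⟩; exact hbsmin b' hb'⟩
          ⟨bs, hbsA, rfl⟩
      · exact le_csInf ⟨IQ b0, b0, hb0A, rfl⟩ (by rintro _ ⟨b', hb', rfl⟩; exact hbsmin b' hb')
    have h2 : sInf (IP '' SP) = IP (ρmin bs) := by
      apply le_antisymm
      · exact csInf_le ⟨IP (ρmin bs), by rintro _ ⟨σ, hσ, rfl⟩; exact hIPmin σ hσ⟩
          ⟨ρmin bs, hρsSP, rfl⟩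
      · exact le_csInf ⟨IP (ρmin bs), ρmin bs, hρsSP, rfl⟩
          (by rintro _ ⟨σ, hσ, rfl⟩; exact hIPmin σ hσ)
    rw [h1, h2, hρsEq]
  · -- iff
    intro b hbA
    obtain ⟨hSPb, hEqb⟩ := fact1 b hbA
    constructor
    · intro hminb
      refine ⟨hSPb, fun σ hσ => ?_⟩
      obtain ⟨hσA, hσle⟩ := fact2 σ hσ
      calc IP (ρmin b) = IQ b := hEqb
        _ ≤ IQ (mom μ a σ) := hminb _ hσA
        _ ≤ IP σ := hσle
    · rintro ⟨_, hminρ⟩ b' hb'A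
      obtain ⟨hSPb', hEqb'⟩ := fact1 b' hb'A
      calc IQ b = IP (ρmin b) := hEqb.symm
        _ ≤ IP (ρmin b') := hminρ _ hSPb'
        _ = IQ b' := hEqb'
  · -- every minimiser of IP is ρmin b for a minimiser b of IQ
    intro ρ hρSP hρmin
    obtain ⟨hbA, hble⟩ := fact2 ρ hρSP
    set b := mom μ a ρ with hb
    obtain ⟨hSPb, hEqb⟩ := fact1 b hbA
    have hbQ := hAQ hbA
    have hbminQ : ∀ b' ∈ A, IQ b ≤ IQ b' := by
      intro b' hb'A
      obtain ⟨hSPb', hEqb'⟩ := fact1 b' hb'A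
      calc IQ b ≤ IP ρ := hble
        _ ≤ IP (ρmin b') := hρmin _ hSPb'
        _ = IQ b' := hEqb'
    obtain ⟨hρP', hρi', _⟩ := hρSP
    have hle1 : ψ b ≤ ∫ t, φ (ρ t) ∂μ := hmin _ hbQ ρ hρP' rfl hρi'
    have hle2 : ∫ t, φ (ρ t) ∂μ ≤ ψ b := by
      have h01 : IP ρ ≤ IP (ρmin b) := hρmin _ hSPb
      have h02 : IP (ρmin b) = IQ b := hEqb
      have h03 : IP ρ = (∫ t, φ (ρ t) ∂μ) + f b := rfl
      have h04 : IQ b = ψ b + f b := rfl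
      linarith [h01, h02 ▸ h01]
    exact ⟨b, hbA, hbminQ, huniq _ hbQ ρ hρP' rfl hρi' (le_antisymm hle1 hle2)⟩
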